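/- Let G be a connected simple graph with diameter d and let p ≠ 0 be a real number. If the p-Sombor matrix S_p(G) has exactly k distinct eigenvalues, then k ≥ d + 1. -/

import Mathlib

open Finset Polynomial Matrix

section SomborAux

/-- Conjugation commutes with powers. -/
private lemma sombor_conj_pow {n : ℕ} (U B : Matrix (Fin n) (Fin n) ℝ)
    (hU : U * star U = 1) (hU' : star U * U = 1) (m : ℕ) :
    (U * B * star U) ^ m = U * B ^ m * star U := by
  induction m with
  | zero => simp [hU]
  | succ m ih =>
      rw [pow_succ, ih, pow_succ]
      calc U * B ^ m * star U * (U * B * star U)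
          = U * B ^ m * (star U * U) * B * star U := by
            simp only [Matrix.mul_assoc]
        _ = U * (B ^ m * B) * star U := by rw [hU']; simp only [Matrix.mul_assoc, Matrix.mul_one]
        _ = _ := by simp only [Matrix.mul_assoc]

private lemma conj_aeval {n : ℕ} (U B : Matrix (Fin n) (Fin n) ℝ)
    (hU : U * star U = 1) (hU' : star U * U = 1) (q : ℝ[X]) :
    aeval (U * B * star U) q = U * aeval B q * star U := by
  rw [Polynomial.aeval_eq_sum_range (x := U * B * star U),
    Polynomial.aeval_eq_sum_range (x := B), Finset.mul_sum, Finset.sum_mul]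
  refine Finset.sum_congr rfl fun i _ => ?_
  rw [sombor_conj_pow U B hU hU' i, mul_smul_comm, smul_mul_assoc]

end SomborAux

/-- The `p`-Sombor matrix of a simple graph `G` on vertices `{0, …, n-1}`:
its `(i,j)` entry is `((d i)^p + (d j)^p)^(1/p)` when `i ~ j`, and `0` otherwise. -/
noncomputable def somborMatrix (n : ℕ) (G : SimpleGraph (Fin n)) [DecidableRel G.Adj]
    (p : ℝ) : Matrix (Fin n) (Fin n) ℝ :=
  Matrix.of fun i j =>
    if G.Adj i j then ((G.degree i : ℝ) ^ p + (G.degree j : ℝ) ^ p) ^ (1 / p) else 0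

/-- Sum of a symmetric weight `f` over the edges of `G`
(each unordered edge counted once). -/
noncomputable def edgeSum (n : ℕ) (G : SimpleGraph (Fin n)) [DecidableRel G.Adj]
    (f : Fin n → Fin n → ℝ) : ℝ :=
  (1 / 2) * ∑ i, ∑ j, if G.Adj i j then f i j else 0

/-- The `p`-Sombor index `SO_p(G) = ∑_{ij ∈ E(G)} ((d i)^p + (d j)^p)^(1/p)`. -/
noncomputable def somborIndex (n : ℕ) (G : SimpleGraph (Fin n)) [DecidableRel G.Adj]
    (p : ℝ) : ℝ :=
  edgeSum n G fun i j => ((G.degree i : ℝ) ^ p + (G.degree j : ℝ) ^ p) ^ (1 / p)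

section SomborLemmas

variable {n : ℕ} {G : SimpleGraph (Fin n)} [DecidableRel G.Adj] {p : ℝ}

lemma somborMatrix_nonneg (i j : Fin n) : 0 ≤ somborMatrix n G p i j := by
  simp only [somborMatrix, Matrix.of_apply]
  split
  · have h1 : (0:ℝ) ≤ (G.degree i : ℝ) ^ p := Real.rpow_nonneg (Nat.cast_nonneg _) p
    have h2 : (0:ℝ) ≤ (G.degree j : ℝ) ^ p := Real.rpow_nonneg (Nat.cast_nonneg _) p
    exact Real.rpow_nonneg (by linarith) _
  · exact le_refl 0

lemma somborMatrix_pos (hdeg : ∀ i : Fin n, 0 < G.degree i) {i j : Fin n} (h : G.Adj i j) :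
    0 < somborMatrix n G p i j := by
  simp only [somborMatrix, Matrix.of_apply, if_pos h]
  have h1 : (0:ℝ) < (G.degree i : ℝ) ^ p :=
    Real.rpow_pos_of_pos (by exact_mod_cast hdeg i) p
  have h2 : (0:ℝ) < (G.degree j : ℝ) ^ p :=
    Real.rpow_pos_of_pos (by exact_mod_cast hdeg j) p
  exact Real.rpow_pos_of_pos (by linarith) _

lemma somborMatrix_eq_zero {i j : Fin n} (h : ¬ G.Adj i j) :
    somborMatrix n G p i j = 0 := by
  simp only [somborMatrix, Matrix.of_apply, if_neg h]

lemma somborMatrix_pow_nonneg (m : ℕ) (i j : Fin n) :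
    0 ≤ ((somborMatrix n G p) ^ m) i j := by
  induction m generalizing i j with
  | zero =>
      rw [pow_zero]
      by_cases h : i = j
      · subst h; simp
      · simp [Matrix.one_apply_ne h]
  | succ m ih =>
      rw [pow_succ, Matrix.mul_apply]
      exact Finset.sum_nonneg fun w _ => mul_nonneg (ih i w) (somborMatrix_nonneg w j)

lemma somborMatrix_pow_eq_zero (hconn : G.Connected) {m : ℕ} {i j : Fin n}
    (h : m < G.dist i j) : ((somborMatrix n G p) ^ m) i j = 0 := by
  induction m generalizing i j with
  | zero =>
      have hij : i ≠ j := by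
        intro he; subst he; simp [SimpleGraph.dist_self] at h
      rw [pow_zero]
      exact Matrix.one_apply_ne hij
  | succ m ih =>
      rw [pow_succ', Matrix.mul_apply]
      refine Finset.sum_eq_zero fun w _ => ?_
      by_cases haw : G.Adj i w
      · have h1 : G.dist i w = 1 := (SimpleGraph.dist_eq_one_iff_adj).mpr haw
        have htri : G.dist i j ≤ G.dist i w + G.dist w j := hconn.dist_triangle
        have : m < G.dist w j := by omega
        rw [ih this, mul_zero]
      · rw [somborMatrix_eq_zero haw, zero_mul]

lemma somborMatrix_pow_dist_pos (hconn : G.Connected) (hdeg : ∀ i : Fin n, 0 < G.degree i)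
    {m : ℕ} {i j : Fin n} (h : G.dist i j = m) :
    0 < ((somborMatrix n G p) ^ m) i j := by
  induction m generalizing i j with
  | zero =>
      have : i = j := hconn.dist_eq_zero_iff.mp h
      subst this
      simp
  | succ m ih =>
      obtain ⟨q, hq⟩ := hconn.exists_walk_length_eq_dist i j
      rw [h] at hq
      cases q with
      | nil => simp at hq
      | @cons _ w _ haw q' =>
          simp only [SimpleGraph.Walk.length_cons, Nat.add_right_cancel_iff] at hq
          have hwj : G.dist w j = m := by
            have hle : G.dist w j ≤ m := hq ▸ SimpleGraph.dist_le q'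
            have h1 : G.dist i w = 1 := (SimpleGraph.dist_eq_one_iff_adj).mpr haw
            have htri : G.dist i j ≤ G.dist i w + G.dist w j := hconn.dist_triangle
            omega
          rw [pow_succ', Matrix.mul_apply]
          refine Finset.sum_pos' (fun w' _ => mul_nonneg (somborMatrix_nonneg i w')
            (somborMatrix_pow_nonneg m w' j)) ⟨w, Finset.mem_univ w, ?_⟩
          exact mul_pos (somborMatrix_pos hdeg haw) (ih hwj)

end SomborLemmas

/-- For a connected graph of diameter `d`, if the `p`-Sombor matrix has
exactly `k` distinct eigenvalues, then `k ≥ d + 1`. -/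
theorem somborMatrix_distinct_eigenvalues_ge_diam (n : ℕ) (G : SimpleGraph (Fin n))
    [DecidableRel G.Adj] (hconn : G.Connected) (hdeg : ∀ i : Fin n, 0 < G.degree i)
    (p : ℝ) (hp : p ≠ 0) (hS : (somborMatrix n G p).IsHermitian) (k : ℕ)
    (hk : (Finset.univ.image hS.eigenvalues).card = k) :
    G.diam + 1 ≤ k := by
  classical
  haveI : Nonempty (Fin n) := hconn.nonempty
  set S := somborMatrix n G p with hSdef
  -- k ≥ 1
  have hk1 : 1 ≤ k := by
    rw [← hk]
    exact Finset.card_pos.mpr ((Finset.univ_nonempty).image _)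
  by_contra hcon
  push_neg at hcon
  have hkd : k ≤ G.diam := by omega
  obtain ⟨u, v, huv⟩ := SimpleGraph.exists_dist_eq_diam (G := G)
  -- the annihilating polynomial
  set q : ℝ[X] := ∏ μ ∈ Finset.univ.image hS.eigenvalues, (X - C μ) with hqdef
  have hqmonic : q.Monic := monic_prod_of_monic _ _ fun μ _ => monic_X_sub_C μ
  have hqdeg : q.natDegree = k := by
    rw [hqdef, Polynomial.natDegree_prod _ _ fun μ _ => X_sub_C_ne_zero μ]
    simp [hk]
  -- q annihilates S
  have hq0 : aeval S q = 0 := by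
    have hsp := hS.spectral_theorem
    rw [RCLike.ofReal_real_eq_id] at hsp
    simp only [Function.id_comp] at hsp
    set U : Matrix (Fin n) (Fin n) ℝ := (hS.eigenvectorUnitary : Matrix (Fin n) (Fin n) ℝ)
      with hUdef
    have hU : U * star U = 1 := Matrix.mem_unitaryGroup_iff.mp hS.eigenvectorUnitary.2
    have hU' : star U * U = 1 := Matrix.mem_unitaryGroup_iff'.mp hS.eigenvectorUnitary.2
    have hDq : aeval (Matrix.diagonal hS.eigenvalues) q = 0 := by
      have : aeval (Matrix.diagonal hS.eigenvalues) q
          = Matrix.diagonal (fun i => eval (hS.eigenvalues i) q) := by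
        have h1 := Polynomial.aeval_algHom_apply (Matrix.diagonalAlgHom (n := Fin n) (α := ℝ) ℝ)
          hS.eigenvalues q
        simp only [Matrix.diagonalAlgHom_apply] at h1
        rw [h1]
        have h2 : (aeval hS.eigenvalues q : Fin n → ℝ)
            = fun i => eval (hS.eigenvalues i) q := by
          funext i
          have h3 := Polynomial.aeval_algHom_apply (Pi.evalAlgHom ℝ (fun _ => ℝ) i)
            hS.eigenvalues q
          simp only [Pi.evalAlgHom_apply] at h3
          rw [← h3, ← Polynomial.coe_aeval_eq_eval]
        rw [h2]
      rw [this]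
      have : (fun i => eval (hS.eigenvalues i) q) = fun _ => (0:ℝ) := by
        funext i
        rw [hqdef, Polynomial.eval_prod]
        exact Finset.prod_eq_zero (Finset.mem_image_of_mem _ (Finset.mem_univ i)) (by simp)
      rw [this, Matrix.diagonal_zero]
    rw [hsp, Unitary.conjStarAlgAut_apply, conj_aeval _ _ hU hU', hDq, Matrix.mul_zero, Matrix.zero_mul]
  -- express S ^ diam in terms of lower powers
  set r : ℝ[X] := X ^ G.diam %ₘ q with hrdef
  have hrdeg : r.natDegree < k := by
    rcases eq_or_ne r 0 with h0 | h0
    · rw [h0]; simp; omega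
    · rw [Polynomial.natDegree_lt_iff_degree_lt h0, ← hqdeg,
        ← Polynomial.degree_eq_natDegree hqmonic.ne_zero]
      exact Polynomial.degree_modByMonic_lt _ hqmonic
  have hSm : S ^ G.diam = aeval S r := by
    have := Polynomial.modByMonic_add_div (X ^ G.diam : ℝ[X]) q
    calc S ^ G.diam = aeval S (X ^ G.diam : ℝ[X]) := by simp
      _ = aeval S (X ^ G.diam %ₘ q + q * (X ^ G.diam /ₘ q)) := by rw [this]
      _ = aeval S r + aeval S q * aeval S (X ^ G.diam /ₘ q) := by
          rw [map_add, _root_.map_mul]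
      _ = aeval S r := by rw [hq0, Matrix.zero_mul, add_zero]
  have hsum : aeval S r = ∑ i ∈ Finset.range k, r.coeff i • S ^ i :=
    Polynomial.aeval_eq_sum_range' hrdeg S
  -- contradiction at entry (u, v)
  have hpos : 0 < (S ^ G.diam) u v :=
    somborMatrix_pow_dist_pos hconn hdeg huv
  have hzero : (S ^ G.diam) u v = 0 := by
    rw [hSm, hsum]
    rw [Matrix.sum_apply]
    refine Finset.sum_eq_zero fun i hi => ?_
    have hik : i < k := Finset.mem_range.mp hi
    have : i < G.dist u v := by omega
    rw [Matrix.smul_apply, somborMatrix_pow_eq_zero hconn this, smul_zero]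
  rw [hzero] at hpos
  exact lt_irrefl 0 hpos
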